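/- arXiv:2311.13605 — 10 statements merged into one kernel-verified Lean document; each statement's English description precedes it below -/
import Mathlib

section
/- For every real parameter p > 0, the two points X₁* = (−(√2/2)·√(P+p), (√2/4)·(p−P)·√(P+p), (p+P)/2) and X₂* = ((√2/2)·√(P+p), −(√2/4)·(p−P)·√(P+p), (p+P)/2), where P = √(p²+4), are equilibria of the IDMDE vector field, i.e. f(X₁*) = 0 and f(X₂*) = 0. -/
/-- The IDMDE vector field with parameter `p`. -/
def idmde (p : ℝ) (x : ℝ × ℝ × ℝ) : ℝ × ℝ × ℝ :=
  (x.2.1 * x.2.2 - x.1, (x.2.2 - p) * x.1 - x.2.1, 1 - x.1 * x.2.1)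

/-- for every `p > 0`, the two explicit points `X₁*` and `X₂*`
(with `P = √(p²+4)`) are equilibria of the IDMDE vector field. -/
theorem idmde_equilibria (p : ℝ) (hp : 0 < p) :
    idmde p (-(Real.sqrt 2 / 2) * Real.sqrt (Real.sqrt (p ^ 2 + 4) + p),
             (Real.sqrt 2 / 4) * (p - Real.sqrt (p ^ 2 + 4)) *
               Real.sqrt (Real.sqrt (p ^ 2 + 4) + p),
             (p + Real.sqrt (p ^ 2 + 4)) / 2) = 0 ∧
    idmde p ((Real.sqrt 2 / 2) * Real.sqrt (Real.sqrt (p ^ 2 + 4) + p),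
             -((Real.sqrt 2 / 4) * (p - Real.sqrt (p ^ 2 + 4)) *
               Real.sqrt (Real.sqrt (p ^ 2 + 4) + p)),
             (p + Real.sqrt (p ^ 2 + 4)) / 2) = 0 := by

  have hP2 : Real.sqrt (p ^ 2 + 4) ^ 2 = p ^ 2 + 4 :=
    Real.sq_sqrt (by positivity)
  have hPpos : 0 ≤ Real.sqrt (p ^ 2 + 4) := Real.sqrt_nonneg _
  have hs2 : Real.sqrt (Real.sqrt (p ^ 2 + 4) + p) ^ 2 = Real.sqrt (p ^ 2 + 4) + p :=
    Real.sq_sqrt (by positivity)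
  have h2 : Real.sqrt 2 ^ 2 = 2 := Real.sq_sqrt (by norm_num)
  set P := Real.sqrt (p ^ 2 + 4)
  set s := Real.sqrt (P + p)
  set r := Real.sqrt 2
  constructor <;> simp only [idmde, Prod.mk.injEq, Prod.mk_eq_zero] <;>
    refine ⟨?_, by ring, ?_⟩ <;>
      first
        | linear_combination (-(r * s) / 8) * hP2
        | linear_combination ((r * s) / 8) * hP2
        | linear_combination (r ^ 2 / 8 * (p - P)) * hs2 + ((P + p) * (p - P) / 8) * h2
            - (1 / 4) * hP2
end

section
/- For every real parameter p > 0, the equation f(x) = 0 has exactly two real solutions, namely X₁* = (−(√2/2)·√(P+p), (√2/4)·(p−P)·√(P+p), (p+P)/2) and X₂* = ((√2/2)·√(P+p), −(√2/4)·(p−P)·√(P+p), (p+P)/2), where P = √(p²+4); every x ∈ ℝ³ with f(x) = 0 equals X₁* or X₂*. -/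
/-- for every `p > 0`, the equation `f(x) = 0` has exactly the two
solutions `X₁*` and `X₂*` (with `P = √(p²+4)`): both are distinct equilibria, and
every solution equals one of them. -/
theorem idmde_exactly_two_equilibria (p : ℝ) (hp : 0 < p) :
    let X₁ : ℝ × ℝ × ℝ :=
      (-(Real.sqrt 2 / 2) * Real.sqrt (Real.sqrt (p ^ 2 + 4) + p),
       (Real.sqrt 2 / 4) * (p - Real.sqrt (p ^ 2 + 4)) *
         Real.sqrt (Real.sqrt (p ^ 2 + 4) + p),
       (p + Real.sqrt (p ^ 2 + 4)) / 2)
    let X₂ : ℝ × ℝ × ℝ :=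
      ((Real.sqrt 2 / 2) * Real.sqrt (Real.sqrt (p ^ 2 + 4) + p),
       -((Real.sqrt 2 / 4) * (p - Real.sqrt (p ^ 2 + 4)) *
         Real.sqrt (Real.sqrt (p ^ 2 + 4) + p)),
       (p + Real.sqrt (p ^ 2 + 4)) / 2)
    idmde p X₁ = 0 ∧ idmde p X₂ = 0 ∧ X₁ ≠ X₂ ∧
      ∀ x : ℝ × ℝ × ℝ, idmde p x = 0 → x = X₁ ∨ x = X₂ := by
  intro X₁ X₂
  have hP2 : (Real.sqrt (p ^ 2 + 4)) ^ 2 = p ^ 2 + 4 := Real.sq_sqrt (by positivity)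
  have hPpos : 0 < Real.sqrt (p ^ 2 + 4) := Real.sqrt_pos.mpr (by positivity)
  set P := Real.sqrt (p ^ 2 + 4) with hPdef
  have hPp : p < P := by nlinarith
  have hs2 : (Real.sqrt (P + p)) ^ 2 = P + p := Real.sq_sqrt (by positivity)
  have hspos : 0 < Real.sqrt (P + p) := Real.sqrt_pos.mpr (by positivity)
  set s := Real.sqrt (P + p) with hsdef
  have h2 : (Real.sqrt 2) ^ 2 = 2 := Real.sq_sqrt (by norm_num)
  have h2pos : 0 < Real.sqrt 2 := Real.sqrt_pos.mpr (by norm_num)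
  set r := Real.sqrt 2 with hrdef
  refine ⟨?_, ?_, ?_, ?_⟩
  · show idmde p X₁ = 0
    simp only [idmde, X₁, Prod.ext_iff, Prod.fst_zero, Prod.snd_zero]
    rw [← hPdef, ← hsdef, ← hrdef]
    refine ⟨?_, ?_, ?_⟩
    · linear_combination (-(r * s) / 8) * hP2
    · ring
    · linear_combination (s ^ 2 * (p - P) / 8) * h2 + ((p - P) / 4) * hs2 - hP2 / 4
  · show idmde p X₂ = 0
    simp only [idmde, X₂, Prod.ext_iff, Prod.fst_zero, Prod.snd_zero]
    rw [← hPdef, ← hsdef, ← hrdef]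
    refine ⟨?_, ?_, ?_⟩
    · linear_combination ((r * s) / 8) * hP2
    · ring
    · linear_combination (s ^ 2 * (p - P) / 8) * h2 + ((p - P) / 4) * hs2 - hP2 / 4
  · intro h
    have h1 := congrArg Prod.fst h
    simp only [X₁, X₂] at h1
    rw [← hPdef, ← hsdef, ← hrdef] at h1
    have hrs : 0 < r * s := mul_pos h2pos hspos
    nlinarith [h1, hrs]
  · rintro ⟨a, b, c⟩ hx
    simp only [idmde, Prod.ext_iff, Prod.fst_zero, Prod.snd_zero] at hx
    obtain ⟨e1, e2, e3⟩ := hx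
    -- e1 : b * c - a = 0, e2 : (c - p) * a - b = 0, e3 : 1 - a * b = 0
    have hc : c = a ^ 2 := by linear_combination a * e1 + c * e3
    have hquart : a ^ 2 * (a ^ 2 - p) = 1 := by
      linear_combination a * e2 - e3 - a ^ 2 * hc
    have hkey : (a ^ 2 - (p + P) / 2) * (a ^ 2 - (p - P) / 2) = 0 := by
      linear_combination hquart - hP2 / 4
    have hfac : a ^ 2 = (p + P) / 2 := by
      rcases mul_eq_zero.mp hkey with h | h
      · linarith
      · nlinarith [sq_nonneg a]
    have habs : (a - r / 2 * s) * (a + r / 2 * s) = 0 := by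
      linear_combination hfac - (s ^ 2 / 4) * h2 - hs2 / 2
    have hb : b = (P - p) / 2 * a := by
      linear_combination -e2 + a * hc + a * hfac
    rcases mul_eq_zero.mp habs with h | h
    · right
      have ha : a = r / 2 * s := by linarith
      simp only [X₂, Prod.ext_iff]
      rw [← hPdef, ← hsdef, ← hrdef]
      refine ⟨by linarith, ?_, ?_⟩
      · rw [hb, ha]; ring
      · rw [hc, ha]; linear_combination (s ^ 2 / 4) * h2 + hs2 / 2
    · left
      have ha : a = -(r / 2) * s := by linarith
      simp only [X₁, Prod.ext_iff]
      rw [← hPdef, ← hsdef, ← hrdef]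
      refine ⟨by linarith, ?_, ?_⟩
      · rw [hb, ha]; ring
      · rw [hc, ha]; linear_combination (s ^ 2 / 4) * h2 + hs2 / 2
end

section
/- For every real parameter p > 0 and every equilibrium x = (x₁,x₂,x₃) of the IDMDE vector field (i.e. f(x) = 0), one has x₁² = x₃ and x₂² = 1/x₃; consequently x₁² + x₂² = √(p²+4). -/
/-- for every `p > 0` and every equilibrium `x = (x₁,x₂,x₃)` of the
IDMDE vector field, `x₁² = x₃` and `x₂² = 1/x₃`; consequently
`x₁² + x₂² = √(p²+4)`. -/
theorem idmde_equilibrium_square_coordinates (p : ℝ) (hp : 0 < p)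
    (x : ℝ × ℝ × ℝ) (hx : idmde p x = 0) :
    x.1 ^ 2 = x.2.2 ∧
    x.2.1 ^ 2 = 1 / x.2.2 ∧
    x.1 ^ 2 + x.2.1 ^ 2 = Real.sqrt (p ^ 2 + 4) := by
  obtain ⟨a, b, c⟩ := x
  simp only [idmde, Prod.ext_iff, Prod.fst_zero, Prod.snd_zero] at hx
  obtain ⟨e1, e2, e3⟩ := hx
  simp only at e1 e2 e3 ⊢
  have hab : a * b = 1 := by linarith
  -- multiply e1 by a : a*b*c = a^2, so c = a^2
  have h1 : a ^ 2 = c := by linear_combination (-a) * e1 - c * e3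
  -- multiply e2 by b : (c-p)*(a*b) = b^2, so b^2 = c - p
  have h2 : b ^ 2 = c - p := by linear_combination (-b) * e2 - (c - p) * e3
  have hc : 0 < c := by nlinarith [sq_nonneg a, sq_nonneg (a*b)]
  refine ⟨h1, ?_, ?_⟩
  · rw [eq_div_iff (ne_of_gt hc)]
    nlinarith
  · have key : p ^ 2 + 4 = (a ^ 2 + b ^ 2) ^ 2 := by nlinarith [sq_nonneg (a*b)]
    rw [key, Real.sqrt_sq (by positivity)]
end

section
/- For every real parameter p > 0 and every equilibrium x = (x₁,x₂,x₃) of the IDMDE vector field, the determinant of the Jacobian matrix satisfies det J(x) = −2·√(p²+4). -/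
/-- The Jacobian matrix of the IDMDE vector field with parameter `p`,
evaluated at `x = (x₁,x₂,x₃)`. -/
def idmdeJacobian (p : ℝ) (x : ℝ × ℝ × ℝ) : Matrix (Fin 3) (Fin 3) ℝ :=
  !![-1, x.2.2, x.2.1;
     x.2.2 - p, -1, x.1;
     -x.2.1, -x.1, 0]

/-- for every `p > 0` and every equilibrium `x` of the IDMDE vector
field, `det J(x) = −2·√(p²+4)`. -/
theorem idmde_det_jacobian (p : ℝ) (hp : 0 < p)
    (x : ℝ × ℝ × ℝ) (hx : idmde p x = 0) :
    (idmdeJacobian p x).det = -2 * Real.sqrt (p ^ 2 + 4) := by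
  obtain ⟨a, b, c⟩ := x
  obtain ⟨h1, h2, h3⟩ :
      b * c - a = 0 ∧ ((c - p) * a - b = 0 ∧ 1 - a * b = 0) := by
    simpa [idmde, Prod.ext_iff] using hx
  have hab : a * b = 1 := by linarith
  have hc : a * a = c := by linear_combination (-a) * h1 + c * hab
  have hcpos : 0 < c := by nlinarith [sq_nonneg b, sq_nonneg (a * b)]
  have hcq : c * c = p * c + 1 := by linear_combination a * h2 - (c - p) * hc - h3
  have hb2 : b * b * c = 1 := by linear_combination b * h1 + hab
  have hcp : 0 ≤ 2 * c - p := by nlinarith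
  have hsqrt : Real.sqrt (p ^ 2 + 4) = 2 * c - p := by
    rw [show p ^ 2 + 4 = (2 * c - p) ^ 2 by nlinarith]
    exact Real.sqrt_sq hcp
  rw [hsqrt]
  simp [idmdeJacobian, Matrix.det_fin_three]
  linear_combination (-1 : ℝ) * hc + (p - 2 * c) * hab + (p - c) * hb2 + b * b * hcq
end

section
/- For every real parameter p > 0 and every equilibrium x of the IDMDE vector field, the characteristic polynomial of the Jacobian matrix J(x) factors as det(λI − J(x)) = (λ + 2)·(λ² + √(p²+4)). -/
/-- for every `p > 0` and every equilibrium `x` of the IDMDE vector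
field, the characteristic polynomial of `J(x)` factors as
`det(λI − J(x)) = (λ + 2)·(λ² + √(p²+4))`. -/
theorem idmde_charpoly_factorization (p : ℝ) (hp : 0 < p)
    (x : ℝ × ℝ × ℝ) (hx : idmde p x = 0) :
    ∀ lam : ℝ,
      (lam • (1 : Matrix (Fin 3) (Fin 3) ℝ) - idmdeJacobian p x).det =
        (lam + 2) * (lam ^ 2 + Real.sqrt (p ^ 2 + 4)) := by
  obtain ⟨a, b, c⟩ := x
  simp only [idmde, Prod.ext_iff, Prod.fst_zero, Prod.snd_zero] at hx
  obtain ⟨h1, h2, h3⟩ := hx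
  have h1 : a = b * c := by linarith
  have h2 : b = (c - p) * a := by linarith
  have h3 : a * b = 1 := by linarith
  have hb : b ≠ 0 := by rintro rfl; simp at h3
  have ha : a ≠ 0 := by rintro rfl; simp at h3
  have hc : b ^ 2 * c = 1 := by rw [← h3]; nth_rewrite 1 [h1]; ring
  have ha2 : a ^ 2 = c := by
    calc a ^ 2 = (b ^ 2 * c) * c := by rw [h1]; ring
    _ = c := by rw [hc]; ring
  have hcpos : 0 < c := by rw [← ha2]; positivity
  have hq : c * (c - p) = 1 := by
    calc c * (c - p) = ((c - p) * a) * a := by rw [← ha2]; ring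
    _ = 1 := by rw [← h2, mul_comm]; exact h3
  have hb2 : b ^ 2 = c - p := by
    have h := mul_left_cancel₀ (ne_of_gt hcpos)
      (show c * b ^ 2 = c * (c - p) by rw [mul_comm c (b ^ 2), hc, hq])
    exact h
  have hs : Real.sqrt (p ^ 2 + 4) = 2 * c - p := by
    rw [show p ^ 2 + 4 = (2 * c - p) ^ 2 by nlinarith]
    exact Real.sqrt_sq (by nlinarith)
  intro lam
  rw [Matrix.det_fin_three, hs]
  simp [idmdeJacobian, Matrix.smul_apply, Matrix.one_apply]
  nlinarith [sq_nonneg lam, sq_nonneg (lam + 1)]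
end

section
/- For every real parameter p > 0 and every equilibrium x of the IDMDE vector field, the eigenvalues (over ℂ) of the Jacobian matrix J(x) are exactly σ₁ = −2 and the purely imaginary conjugate pair σ₂,₃ = ± i·(p²+4)^{1/4}; in particular one eigenvalue is the real constant −2 (independent of p) and the other two have zero real part. -/
/-- The Jacobian matrix of the IDMDE vector field with parameter `p` at
`x = (x₁,x₂,x₃)`, regarded as a complex 3×3 matrix. -/
def idmdeJacobianC (p : ℝ) (x : ℝ × ℝ × ℝ) : Matrix (Fin 3) (Fin 3) ℂ :=
  !![-1, (x.2.2 : ℂ), (x.2.1 : ℂ);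
     ((x.2.2 - p : ℝ) : ℂ), -1, (x.1 : ℂ);
     (-x.2.1 : ℝ), (-x.1 : ℝ), 0]

lemma spec_iff (M : Matrix (Fin 3) (Fin 3) ℂ) (σ : ℂ) :
    σ ∈ spectrum ℂ M ↔
      (σ - M 0 0) * (σ - M 1 1) * (σ - M 2 2) - (σ - M 0 0) * M 1 2 * M 2 1
      - M 0 1 * M 1 0 * (σ - M 2 2) - M 0 1 * M 1 2 * M 2 0
      - M 0 2 * M 1 0 * M 2 1 - M 0 2 * (σ - M 1 1) * M 2 0 = 0 := by
  rw [spectrum.mem_iff, Matrix.isUnit_iff_isUnit_det, isUnit_iff_ne_zero, not_ne_iff,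
    Matrix.det_fin_three]
  simp only [Matrix.sub_apply, Matrix.algebraMap_matrix_apply, Fin.ext_iff]
  norm_num
  constructor <;> intro h <;> linear_combination h

/-- for every `p > 0` and every equilibrium `x` of the IDMDE vector
field, the eigenvalues over `ℂ` of `J(x)` are exactly `σ₁ = −2` and the purely
imaginary conjugate pair `σ₂,₃ = ± i·(p²+4)^{1/4}`; in particular one eigenvalue
is the real constant `−2` and the other two have zero real part. -/
theorem idmde_eigenvalues (p : ℝ) (hp : 0 < p)
    (x : ℝ × ℝ × ℝ) (hx : idmde p x = 0) :
    spectrum ℂ (idmdeJacobianC p x) =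
      {(-2 : ℂ),
       Complex.I * (((p ^ 2 + 4) ^ ((1 : ℝ) / 4) : ℝ) : ℂ),
       -(Complex.I * (((p ^ 2 + 4) ^ ((1 : ℝ) / 4) : ℝ) : ℂ))} ∧
    ((-2 : ℂ) ∈ spectrum ℂ (idmdeJacobianC p x) ∧
      ∀ σ ∈ spectrum ℂ (idmdeJacobianC p x), σ ≠ -2 → σ.re = 0) := by
  obtain ⟨a, b, c⟩ := x
  obtain ⟨h1, h2, h3⟩ : b * c - a = 0 ∧ (c - p) * a - b = 0 ∧ 1 - a * b = 0 := by
    simpa [idmde, Prod.ext_iff] using hx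
  have hab : a * b = 1 := by linarith
  have hbc : b * c = a := by linarith
  have hca : (c - p) * a = b := by linarith
  have hc : a ^ 2 = c := by
    calc a ^ 2 = a * (b * c) := by rw [hbc]; ring
    _ = (a * b) * c := by ring
    _ = c := by rw [hab]; ring
  have hb2 : b ^ 2 = c - p := by linear_combination (-b) * hca + (c - p) * hab
  have hcc : c * (c - p) = 1 := by
    have h4 : a * b * (c * (c - p)) = (b * c) * ((c - p) * a) := by ring
    rw [hbc, hca, hab, one_mul] at h4
    exact h4
  have hk2 : (2 * c - p) ^ 2 = p ^ 2 + 4 := by linear_combination 4 * hcc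
  have hcnn : 0 ≤ c := hc ▸ sq_nonneg a
  have hkpos : 0 < 2 * c - p := by
    by_contra h
    push_neg at h
    nlinarith [mul_nonneg (neg_nonneg.2 h) (by linarith : (0:ℝ) ≤ p + (2 * c - p))]
  set r : ℝ := (p ^ 2 + 4) ^ ((1 : ℝ) / 4) with hrdef
  have hpos : (0:ℝ) < p ^ 2 + 4 := by positivity
  have hr4 : r ^ 4 = p ^ 2 + 4 := by
    rw [hrdef, ← Real.rpow_natCast _ 4, ← Real.rpow_mul hpos.le]
    norm_num
  have hrnn : 0 ≤ r := Real.rpow_nonneg hpos.le _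
  have hr2 : r ^ 2 = 2 * c - p := by
    have hprod : (r ^ 2 - (2 * c - p)) * (r ^ 2 + (2 * c - p)) = 0 := by
      linear_combination hr4 - hk2
    rcases mul_eq_zero.1 hprod with h | h
    · linarith
    · nlinarith [sq_nonneg r]
  have A2 : (a : ℂ) ^ 2 = c := by exact_mod_cast hc
  have B2 : (b : ℂ) ^ 2 = (c : ℂ) - p := by exact_mod_cast hb2
  have AB : (a : ℂ) * b = 1 := by exact_mod_cast hab
  have CC : (c : ℂ) * ((c : ℂ) - p) = 1 := by exact_mod_cast hcc
  have R2 : (r : ℂ) ^ 2 = 2 * c - p := by exact_mod_cast hr2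
  have I2 : Complex.I ^ 2 = -1 := Complex.I_sq
  have key : ∀ σ : ℂ, σ ∈ spectrum ℂ (idmdeJacobianC p (a, b, c)) ↔
      (σ + 2) * ((σ - Complex.I * r) * (σ + Complex.I * r)) = 0 := by
    intro σ
    rw [spec_iff]
    have hdet :
        (σ - idmdeJacobianC p (a,b,c) 0 0) * (σ - idmdeJacobianC p (a,b,c) 1 1) *
            (σ - idmdeJacobianC p (a,b,c) 2 2)
        - (σ - idmdeJacobianC p (a,b,c) 0 0) * idmdeJacobianC p (a,b,c) 1 2 *
            idmdeJacobianC p (a,b,c) 2 1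
        - idmdeJacobianC p (a,b,c) 0 1 * idmdeJacobianC p (a,b,c) 1 0 *
            (σ - idmdeJacobianC p (a,b,c) 2 2)
        - idmdeJacobianC p (a,b,c) 0 1 * idmdeJacobianC p (a,b,c) 1 2 *
            idmdeJacobianC p (a,b,c) 2 0
        - idmdeJacobianC p (a,b,c) 0 2 * idmdeJacobianC p (a,b,c) 1 0 *
            idmdeJacobianC p (a,b,c) 2 1
        - idmdeJacobianC p (a,b,c) 0 2 * (σ - idmdeJacobianC p (a,b,c) 1 1) *
            idmdeJacobianC p (a,b,c) 2 0
        = (σ + 2) * ((σ - Complex.I * r) * (σ + Complex.I * r)) := by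
      have e00 : idmdeJacobianC p (a,b,c) 0 0 = -1 := by simp [idmdeJacobianC]
      have e01 : idmdeJacobianC p (a,b,c) 0 1 = (c:ℂ) := by simp [idmdeJacobianC]
      have e02 : idmdeJacobianC p (a,b,c) 0 2 = (b:ℂ) := by simp [idmdeJacobianC]
      have e10 : idmdeJacobianC p (a,b,c) 1 0 = (c:ℂ) - p := by simp [idmdeJacobianC]
      have e11 : idmdeJacobianC p (a,b,c) 1 1 = -1 := by simp [idmdeJacobianC]
      have e12 : idmdeJacobianC p (a,b,c) 1 2 = (a:ℂ) := by simp [idmdeJacobianC]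
      have e20 : idmdeJacobianC p (a,b,c) 2 0 = -(b:ℂ) := by simp [idmdeJacobianC]
      have e21 : idmdeJacobianC p (a,b,c) 2 1 = -(a:ℂ) := by simp [idmdeJacobianC]
      have e22 : idmdeJacobianC p (a,b,c) 2 2 = 0 := by simp [idmdeJacobianC]
      rw [e00, e01, e02, e10, e11, e12, e20, e21, e22]
      linear_combination (σ + 1) * A2 + (σ + 1) * B2 + (2 * (c:ℂ) - p) * AB - σ * CC
        + (σ + 2) * Complex.I ^ 2 * R2 + (σ + 2) * (2 * (c:ℂ) - p) * I2
    rw [hdet]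
  refine ⟨?_, ?_, ?_⟩
  · ext σ
    rw [key σ, mul_eq_zero]
    simp only [mul_eq_zero, Set.mem_insert_iff, Set.mem_singleton_iff]
    constructor
    · rintro (h | h | h)
      · exact Or.inl (by linear_combination h)
      · exact Or.inr (Or.inl (by linear_combination h))
      · exact Or.inr (Or.inr (by linear_combination h))
    · rintro (h | h | h) <;> subst h
      · exact Or.inl (by ring)
      · exact Or.inr (Or.inl (by ring))
      · exact Or.inr (Or.inr (by ring))
  · exact (key (-2)).2 (by ring)
  · intro σ hσ hne
    rw [key σ, mul_eq_zero, mul_eq_zero] at hσ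
    rcases hσ with h | h | h
    · exact absurd (by linear_combination h) hne
    · have hσ' : σ = Complex.I * r := by linear_combination h
      simp [hσ']
    · have hσ' : σ = -(Complex.I * r) := by linear_combination h
      simp [hσ']
end

section
/- (Matignon stability condition for p = 5, content of Theorem 1.) Let p = 5 and let x be either equilibrium of the IDMDE vector field. Then for every eigenvalue σ ∈ ℂ of the Jacobian matrix J(x) and every fractional order q ∈ (0,1), one has |arg σ| > q·π/2; equivalently, with α_min the minimum of |arg σ| over the eigenvalues, α_min = π/2, so the Matignon index ι = q − 2|α_min|/π = q − 1 is strictly negative for all q ∈ (0,1). -/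
lemma idmde_spec_iff (M : Matrix (Fin 3) (Fin 3) ℂ) (σ : ℂ) :
    σ ∈ spectrum ℂ M ↔ (σ • 1 - M).det = 0 := by
  rw [spectrum.mem_iff, Algebra.algebraMap_eq_smul_one, Matrix.isUnit_iff_isUnit_det,
    isUnit_iff_ne_zero, not_ne_iff]

lemma idmde_det_eq (x : ℝ × ℝ × ℝ) (σ : ℂ)
    (hA2 : x.1 ^ 2 = x.2.2) (hAB : x.1 * x.2.1 = 1)
    (hTT : x.2.2 * (x.2.2 - 5) = 1) (hB2 : x.2.1 ^ 2 = x.2.2 - 5) :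
    (σ • 1 - idmdeJacobianC 5 x).det
      = (σ + 2) * (σ ^ 2 + ((2 * x.2.2 - 5 : ℝ) : ℂ)) := by
  have hA2c : (x.1 : ℂ) ^ 2 = (x.2.2 : ℂ) := by exact_mod_cast congrArg Complex.ofReal hA2
  have hABc : (x.1 : ℂ) * (x.2.1 : ℂ) = 1 := by exact_mod_cast congrArg Complex.ofReal hAB
  have hTTc : (x.2.2 : ℂ) * ((x.2.2 : ℂ) - 5) = 1 := by exact_mod_cast congrArg Complex.ofReal hTT
  have hB2c : (x.2.1 : ℂ) ^ 2 = (x.2.2 : ℂ) - 5 := by exact_mod_cast congrArg Complex.ofReal hB2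
  simp [idmdeJacobianC, Matrix.det_fin_three, Matrix.smul_apply, Matrix.one_apply,
    Matrix.sub_apply]
  linear_combination (σ + 1) * hA2c + (2 * (x.2.2:ℂ) - 5) * hABc - σ * hTTc + (σ + 1) * hB2c

/-- Matignon stability condition for `p = 5`, Theorem 1: at either
equilibrium `x` of the IDMDE vector field with `p = 5`, every eigenvalue `σ` of
`J(x)` satisfies `|arg σ| > q·π/2` for every fractional order `q ∈ (0,1)`;
equivalently, the minimum of `|arg σ|` over the eigenvalues equals `π/2`, so the
Matignon index `ι = q − 2|α_min|/π = q − 1` is strictly negative for `q ∈ (0,1)`. -/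
theorem idmde_matignon_p5 (x : ℝ × ℝ × ℝ) (hx : idmde 5 x = 0) :
    (∀ σ ∈ spectrum ℂ (idmdeJacobianC 5 x),
      ∀ q : ℝ, 0 < q → q < 1 → q * Real.pi / 2 < |σ.arg|) ∧
    IsLeast {a : ℝ | ∃ σ ∈ spectrum ℂ (idmdeJacobianC 5 x), a = |σ.arg|}
      (Real.pi / 2) ∧
    ∀ q : ℝ, 0 < q → q < 1 → q - 2 * |Real.pi / 2| / Real.pi < 0 := by
  have hpi := Real.pi_gt_three
  -- extract equilibrium equations
  rw [idmde, Prod.ext_iff, Prod.ext_iff] at hx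
  obtain ⟨h1, h2, h3⟩ := hx
  simp only [Prod.fst_zero, Prod.snd_zero, sub_eq_zero] at h1 h2 h3
  -- h1 : x.2.1 * x.2.2 = x.1, h2 : (x.2.2 - 5) * x.1 = x.2.1, h3 : 1 = x.1 * x.2.1
  have hAB : x.1 * x.2.1 = 1 := h3.symm
  have hA2 : x.1 ^ 2 = x.2.2 := by linear_combination (-x.1) * h1 + x.2.2 * hAB
  have hTT : x.2.2 * (x.2.2 - 5) = 1 := by linear_combination x.1 * h2 + hAB - (x.2.2 - 5) * hA2
  have hB2 : x.2.1 ^ 2 = x.2.2 - 5 := by linear_combination (-x.2.1) * h2 + (x.2.2 - 5) * hAB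
  set s : ℝ := 2 * x.2.2 - 5 with hs
  have hx2ne : x.2.1 ≠ 0 := by
    intro h; rw [h, mul_zero] at hAB; norm_num at hAB
  have hT5 : 0 < x.2.2 - 5 := lt_of_le_of_ne (hB2 ▸ sq_nonneg _) (by
    intro h; exact hx2ne (pow_eq_zero_iff (n := 2) (by norm_num) |>.mp (hB2.trans h.symm)))
  have hspos : 0 < s := by simp only [hs]; linarith
  have hr : Real.sqrt s > 0 := Real.sqrt_pos.mpr hspos
  have hr2 : (Real.sqrt s : ℝ) ^ 2 = s := Real.sq_sqrt hspos.le
  -- eigenvalue characterization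
  have key : ∀ σ : ℂ, σ ∈ spectrum ℂ (idmdeJacobianC 5 x) ↔
      σ = -2 ∨ σ = Complex.I * (Real.sqrt s : ℝ) ∨ σ = -(Complex.I * (Real.sqrt s : ℝ)) := by
    intro σ
    rw [idmde_spec_iff, idmde_det_eq x σ hA2 hAB hTT hB2, mul_eq_zero]
    constructor
    · rintro (h | h)
      · left; linear_combination h
      · right
        have : (σ - Complex.I * (Real.sqrt s : ℝ)) * (σ + Complex.I * (Real.sqrt s : ℝ)) = 0 := by
          have : (Complex.I * (Real.sqrt s : ℝ)) ^ 2 = -(s : ℂ) := by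
            have : ((Real.sqrt s : ℝ) : ℂ) ^ 2 = (s : ℂ) := by exact_mod_cast hr2
            rw [mul_pow, Complex.I_sq, this]; ring
          linear_combination h - this
        rcases mul_eq_zero.mp this with h' | h'
        · left; linear_combination h'
        · right; linear_combination h'
    · rintro (h | h | h)
      · left; rw [h]; ring
      · right; rw [h, mul_pow, Complex.I_sq]
        have : ((Real.sqrt s : ℝ) : ℂ) ^ 2 = (s : ℂ) := by exact_mod_cast hr2
        rw [this]; ring
      · right
        have h2c : ((Real.sqrt s : ℝ) : ℂ) ^ 2 = ((2 * x.2.2 - 5 : ℝ) : ℂ) := by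
          rw [← hs]; exact_mod_cast hr2
        rw [h, neg_sq, mul_pow, Complex.I_sq, h2c]; ring
  -- arguments of the three eigenvalues
  have arg1 : Complex.arg (-2) = Real.pi := by
    have : ((-2 : ℝ) : ℂ) = (-2 : ℂ) := by norm_num
    rw [← this, Complex.arg_ofReal_of_neg (by norm_num)]
  have argI : Complex.arg (Complex.I * (Real.sqrt s : ℝ)) = Real.pi / 2 := by
    rw [Complex.arg_eq_pi_div_two_iff]
    constructor <;> simp [hr]
  have argnI : Complex.arg (-(Complex.I * (Real.sqrt s : ℝ))) = -(Real.pi / 2) := by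
    rw [Complex.arg_eq_neg_pi_div_two_iff]
    constructor <;> simp [hr]
  have habs : ∀ σ ∈ spectrum ℂ (idmdeJacobianC 5 x), |σ.arg| = Real.pi ∨ |σ.arg| = Real.pi / 2 := by
    intro σ hσ
    rcases (key σ).mp hσ with h | h | h
    · left; rw [h, arg1, abs_of_pos Real.pi_pos]
    · right; rw [h, argI, abs_of_pos (by linarith)]
    · right; rw [h, argnI, abs_neg, abs_of_pos (by linarith)]
  refine ⟨?_, ⟨?_, ?_⟩, ?_⟩
  · intro σ hσ q hq0 hq1
    have : q * Real.pi / 2 < Real.pi / 2 := by nlinarith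
    rcases habs σ hσ with h | h <;> rw [h] <;> linarith
  · exact ⟨Complex.I * (Real.sqrt s : ℝ), (key _).mpr (Or.inr (Or.inl rfl)), by
      rw [argI, abs_of_pos (by linarith)]⟩
  · rintro a ⟨σ, hσ, rfl⟩
    rcases habs σ hσ with h | h <;> rw [h] <;> linarith
  · intro q hq0 hq1
    rw [abs_of_pos (by linarith : (0:ℝ) < Real.pi / 2)]
    have : 2 * (Real.pi / 2) / Real.pi = 1 := by field_simp
    rw [this]; linarith
end

section
/- (Matignon stability condition for all p > 0, content of Conjecture 1.) For every real parameter p > 0, every equilibrium x of the IDMDE vector field, every eigenvalue σ ∈ ℂ of the Jacobian matrix J(x), and every fractional order q ∈ (0,1), one has |arg σ| > q·π/2; moreover the minimum of |arg σ| over the eigenvalues equals π/2, independent of p. -/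
/-- Matignon stability condition for all `p > 0`, Conjecture 1:
for every `p > 0`, every equilibrium `x` of the IDMDE vector field, every
eigenvalue `σ` of `J(x)` and every fractional order `q ∈ (0,1)`, one has
`|arg σ| > q·π/2`; moreover the minimum of `|arg σ|` over the eigenvalues equals
`π/2`, independent of `p`. -/
theorem idmde_matignon_all_p (p : ℝ) (hp : 0 < p)
    (x : ℝ × ℝ × ℝ) (hx : idmde p x = 0) :
    (∀ σ ∈ spectrum ℂ (idmdeJacobianC p x),
      ∀ q : ℝ, 0 < q → q < 1 → q * Real.pi / 2 < |σ.arg|) ∧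
    IsLeast {a : ℝ | ∃ σ ∈ spectrum ℂ (idmdeJacobianC p x), a = |σ.arg|}
      (Real.pi / 2) := by
  obtain ⟨a, b, c⟩ := x
  have e1 : b * c - a = 0 := congrArg Prod.fst hx
  have e2 : (c - p) * a - b = 0 := congrArg (Prod.fst ∘ Prod.snd) hx
  have e3 : 1 - a * b = 0 := congrArg (Prod.snd ∘ Prod.snd) hx
  have hab : a * b = 1 := by linarith
  have ha2 : a ^ 2 = c := by linear_combination (-a) * e1 + (-c) * e3
  have hb2 : b ^ 2 = c - p := by linear_combination (-b) * e2 + (-(c - p)) * e3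
  have ha0 : a ≠ 0 := by
    intro h; rw [h] at hab; simp at hab
  set S : ℝ := a ^ 2 + b ^ 2 with hS
  have hSpos : 0 < S := by positivity
  have cab : (a : ℂ) * (b : ℂ) = 1 := by exact_mod_cast congrArg Complex.ofReal hab
  have ca2 : (a : ℂ) ^ 2 = (c : ℂ) := by exact_mod_cast congrArg Complex.ofReal ha2
  have cb2 : (b : ℂ) ^ 2 = (c : ℂ) - (p : ℂ) := by
    have := congrArg Complex.ofReal hb2
    push_cast at this
    exact this
  -- determinant of `σ•1 - J`
  have hdet : ∀ σ : ℂ, (σ • (1 : Matrix (Fin 3) (Fin 3) ℂ) - idmdeJacobianC p (a, b, c)).det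
      = (σ + 2) * (σ ^ 2 + (S : ℂ)) := by
    intro σ
    simp [idmdeJacobianC, Matrix.det_fin_three, Matrix.smul_apply, Matrix.one_apply, hS]
    push_cast
    linear_combination ((2 * (c : ℂ) - p) - σ * ((a : ℂ) * (b : ℂ) + 1)) * cab +
      σ * (b : ℂ) ^ 2 * ca2 + σ * (c : ℂ) * cb2 - ca2 - cb2
  -- spectrum characterization
  have key : ∀ σ : ℂ, σ ∈ spectrum ℂ (idmdeJacobianC p (a, b, c)) ↔
      (σ + 2) * (σ ^ 2 + (S : ℂ)) = 0 := by
    intro σ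
    rw [spectrum.mem_iff, Algebra.algebraMap_eq_smul_one, Matrix.isUnit_iff_isUnit_det,
      isUnit_iff_ne_zero, not_not, hdet σ]
  -- each eigenvalue has |arg| = π or π/2
  have argfact : ∀ σ : ℂ, σ ∈ spectrum ℂ (idmdeJacobianC p (a, b, c)) →
      |σ.arg| = Real.pi ∨ |σ.arg| = Real.pi / 2 := by
    intro σ hσ
    rw [key σ] at hσ
    rcases mul_eq_zero.mp hσ with h | h
    · left
      have hσ2 : σ = -2 := by linear_combination h
      rw [hσ2, show (-2 : ℂ) = ((-2 : ℝ) : ℂ) by norm_num,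
        Complex.arg_ofReal_of_neg (by norm_num)]
      exact abs_of_pos Real.pi_pos
    · right
      have hsq : σ ^ 2 = -(S : ℂ) := by linear_combination h
      have h1 : σ.re ^ 2 - σ.im ^ 2 = -S := by
        have := congrArg Complex.re hsq
        simpa [pow_two, Complex.mul_re] using this
      have h2 : σ.re * σ.im + σ.im * σ.re = 0 := by
        have := congrArg Complex.im hsq
        simpa [pow_two, Complex.mul_im] using this
      have him : σ.im ≠ 0 := by
        intro h0
        rw [h0] at h1
        nlinarith
      have hre0 : σ.re = 0 := by
        rcases mul_eq_zero.mp (by linarith : σ.re * σ.im = 0) with h' | h'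
        · exact h'
        · exact absurd h' him
      rcases lt_or_gt_of_ne him with h' | h'
      · rw [Complex.arg_eq_neg_pi_div_two_iff.mpr ⟨hre0, h'⟩, abs_neg]
        exact abs_of_pos (by positivity)
      · rw [Complex.arg_eq_pi_div_two_iff.mpr ⟨hre0, h'⟩]
        exact abs_of_pos (by positivity)
  constructor
  · intro σ hσ q hq0 hq1
    have hπ := Real.pi_pos
    rcases argfact σ hσ with h | h <;> rw [h] <;> nlinarith
  · constructor
    · refine ⟨Complex.I * (Real.sqrt S : ℝ), ?_, ?_⟩
      · rw [key]
        have : (Complex.I * (Real.sqrt S : ℝ)) ^ 2 = -(S : ℂ) := by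
          have hs : (Real.sqrt S : ℝ) ^ 2 = S := Real.sq_sqrt hSpos.le
          have : ((Real.sqrt S : ℝ) : ℂ) ^ 2 = (S : ℂ) := by exact_mod_cast congrArg Complex.ofReal hs
          rw [mul_pow, Complex.I_sq]
          rw [this]; ring
        rw [this]
        ring
      · rw [Complex.arg_eq_pi_div_two_iff.mpr ?_]
        · exact (abs_of_pos (by positivity)).symm
        · constructor
          · simp
          · simp [Real.sqrt_pos.mpr hSpos]
    · rintro v ⟨σ, hσ, rfl⟩
      have hπ := Real.pi_pos
      rcases argfact σ hσ with h | h <;> rw [h] <;> linarith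
end

section
/- For p = 5, the two equilibria of the IDMDE vector field are exactly X₁,₂* = (∓√((5+√29)/2), ±(5−√29)/2 · √((5+√29)/2), (5+√29)/2), whose coordinates are numerically (∓2.2787, ∓0.4388, 5.1926). -/
lemma idmde_aux_iff (s r a b c : ℝ) (hs : s ^ 2 = 29) (hs0 : 0 ≤ s)
    (hr : r ^ 2 = (5 + s) / 2) (hr0 : 0 ≤ r) :
    (b * c - a = 0 ∧ (c - 5) * a - b = 0 ∧ 1 - a * b = 0) ↔
      ((a = -r ∧ b = (5 - s) / 2 * r ∧ c = (5 + s) / 2) ∨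
       (a = r ∧ b = -((5 - s) / 2 * r) ∧ c = (5 + s) / 2)) := by
  have hs5 : 5 < s := by nlinarith
  have hrpos : 0 < r := by nlinarith
  constructor
  · rintro ⟨h1, h2, h3⟩
    have hb : a * b = 1 := by linarith
    have ha0 : a ≠ 0 := by intro h; rw [h] at hb; simp at hb
    have hc : c = a ^ 2 := by
      have h4 : a * (b * c - a) = 0 := by rw [h1]; ring
      nlinarith
    have hq : (a ^ 2 - (5 + s) / 2) * (a ^ 2 - (5 - s) / 2) = 0 := by
      have h4 : a * ((c - 5) * a - b) = 0 := by rw [h2]; ring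
      nlinarith
    have ha2 : a ^ 2 = (5 + s) / 2 := by
      rcases mul_eq_zero.mp hq with h | h
      · linarith
      · nlinarith [sq_nonneg a]
    have haa : (a - r) * (a + r) = 0 := by nlinarith
    rcases mul_eq_zero.mp haa with h | h
    · right
      have har : a = r := by linarith
      refine ⟨har, ?_, by rw [hc, har]; linarith⟩
      have hrne : r ≠ 0 := ne_of_gt hrpos
      have h5 : r * b = 1 := by rw [← har]; exact hb
      have h6 : r * (-((5 - s) / 2 * r)) = 1 := by nlinarith
      have := mul_left_cancel₀ hrne (h5.trans h6.symm)
      linarith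
    · left
      have har : a = -r := by linarith
      refine ⟨har, ?_, by rw [hc, har]; nlinarith⟩
      have hrne : r ≠ 0 := ne_of_gt hrpos
      have h5 : r * b = -1 := by rw [har] at hb; linear_combination -hb
      have h6 : r * ((5 - s) / 2 * r) = -1 := by nlinarith
      have := mul_left_cancel₀ hrne (h5.trans h6.symm)
      linarith
  · rintro (⟨ha, hb, hc⟩ | ⟨ha, hb, hc⟩) <;> rw [ha, hb, hc]
    · exact ⟨by linear_combination (-r / 4) * hs, by ring,
        by linear_combination (5 - s) / 2 * hr - (1 / 4) * hs⟩
    · exact ⟨by linear_combination (r / 4) * hs, by ring,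
        by linear_combination (5 - s) / 2 * hr - (1 / 4) * hs⟩

lemma idmde_aux_bounds (s r : ℝ) (hs : s ^ 2 = 29) (hs0 : 0 ≤ s)
    (hr : r ^ 2 = (5 + s) / 2) (hr0 : 0 ≤ r) :
    |(-r) - (-2.2787)| < 0.0001 ∧ |(5 - s) / 2 * r - (-0.4388)| < 0.0001 ∧
    |(5 + s) / 2 - 5.1926| < 0.0001 ∧
    |r - 2.2787| < 0.0001 ∧ |(-((5 - s) / 2 * r)) - 0.4388| < 0.0001 ∧
    |(5 + s) / 2 - 5.1926| < 0.0001 := by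
  have hsl : (5.38516 : ℝ) < s := by nlinarith
  have hsu : s < (5.38517 : ℝ) := by nlinarith
  have hrl : (2.27872 : ℝ) < r := by nlinarith
  have hru : r < (2.27873 : ℝ) := by nlinarith
  refine ⟨?_, ?_, ?_, ?_, ?_, ?_⟩ <;> rw [abs_lt] <;> constructor <;> nlinarith

/-- for `p = 5`, the two equilibria of the IDMDE vector field are
exactly `X₁,₂* = (∓√((5+√29)/2), ±(5−√29)/2·√((5+√29)/2), (5+√29)/2)`, whose
coordinates are numerically `(∓2.2787, ∓0.4388, 5.1926)`. -/
theorem idmde_equilibria_p5 :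
    let X₁ : ℝ × ℝ × ℝ :=
      (-Real.sqrt ((5 + Real.sqrt 29) / 2),
       (5 - Real.sqrt 29) / 2 * Real.sqrt ((5 + Real.sqrt 29) / 2),
       (5 + Real.sqrt 29) / 2)
    let X₂ : ℝ × ℝ × ℝ :=
      (Real.sqrt ((5 + Real.sqrt 29) / 2),
       -((5 - Real.sqrt 29) / 2 * Real.sqrt ((5 + Real.sqrt 29) / 2)),
       (5 + Real.sqrt 29) / 2)
    (∀ x : ℝ × ℝ × ℝ, idmde 5 x = 0 ↔ x = X₁ ∨ x = X₂) ∧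
    |X₁.1 - (-2.2787)| < 0.0001 ∧ |X₁.2.1 - (-0.4388)| < 0.0001 ∧
    |X₁.2.2 - 5.1926| < 0.0001 ∧
    |X₂.1 - 2.2787| < 0.0001 ∧ |X₂.2.1 - 0.4388| < 0.0001 ∧
    |X₂.2.2 - 5.1926| < 0.0001 := by
  have hs0 : (0:ℝ) ≤ Real.sqrt 29 := Real.sqrt_nonneg _
  have hs : Real.sqrt 29 ^ 2 = 29 := Real.sq_sqrt (by norm_num)
  have ht0 : (0:ℝ) ≤ (5 + Real.sqrt 29) / 2 := by nlinarith
  have hr0 : (0:ℝ) ≤ Real.sqrt ((5 + Real.sqrt 29) / 2) := Real.sqrt_nonneg _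
  have hr : Real.sqrt ((5 + Real.sqrt 29) / 2) ^ 2 = (5 + Real.sqrt 29) / 2 :=
    Real.sq_sqrt ht0
  obtain ⟨b1, b2, b3, b4, b5, b6⟩ := idmde_aux_bounds _ _ hs hs0 hr hr0
  refine ⟨?_, b1, b2, b3, b4, b5, b6⟩
  rintro ⟨a, b, c⟩
  have := idmde_aux_iff (Real.sqrt 29) (Real.sqrt ((5 + Real.sqrt 29) / 2)) a b c
    hs hs0 hr hr0
  simpa only [idmde, Prod.ext_iff, Prod.fst_zero, Prod.snd_zero] using this
end

section
/- For every real parameter p > 0 and every equilibrium x = (x₁,x₂,x₃) of the IDMDE vector field, the sum of the three principal 2×2 minors of the Jacobian matrix J(x) equals x₁² + x₂² = √(p²+4) > 0; in particular the identity 1 − x₃² + p·x₃ = 0 holds at the equilibrium. -/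
/-- for every `p > 0` and every equilibrium `x = (x₁,x₂,x₃)` of the
IDMDE vector field, the sum of the three principal 2×2 minors of the Jacobian
`J(x)` (obtained by deleting the `i`-th row and `i`-th column, `i = 1,2,3`)
equals `x₁² + x₂² = √(p²+4) > 0`; in particular `1 − x₃² + p·x₃ = 0` at the
equilibrium. -/
theorem idmde_sum_principal_minors (p : ℝ) (hp : 0 < p)
    (x : ℝ × ℝ × ℝ) (hx : idmde p x = 0) :
    ((idmdeJacobian p x).submatrix ![1, 2] ![1, 2]).det +
        ((idmdeJacobian p x).submatrix ![0, 2] ![0, 2]).det +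
        ((idmdeJacobian p x).submatrix ![0, 1] ![0, 1]).det =
      x.1 ^ 2 + x.2.1 ^ 2 ∧
    x.1 ^ 2 + x.2.1 ^ 2 = Real.sqrt (p ^ 2 + 4) ∧
    0 < Real.sqrt (p ^ 2 + 4) ∧
    1 - x.2.2 ^ 2 + p * x.2.2 = 0 := by
  obtain ⟨a, b, c⟩ := x
  simp only [idmde, Prod.ext_iff, Prod.fst_zero, Prod.snd_zero] at hx
  obtain ⟨h1, h2, h3⟩ := hx
  simp only at h1 h2 h3 ⊢
  -- b ≠ 0 since a * b = 1
  have hb : b ≠ 0 := by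
    intro hb0
    rw [hb0] at h3; norm_num at h3
  -- quadratic for c
  have hq : c ^ 2 - p * c - 1 = 0 := by
    have hb2 : b * (c ^ 2 - p * c - 1) = 0 := by linear_combination (c - p) * h1 + h2
    rcases mul_eq_zero.mp hb2 with h | h
    · exact absurd h hb
    · exact h
  -- b^2 * c = 1
  have hbc : b ^ 2 * c = 1 := by linear_combination b * h1 - h3
  have hc : 0 < c := by nlinarith [sq_nonneg b, hbc]
  -- b^2 = c - p
  have hb2 : b ^ 2 = c - p := by
    have : c * (b ^ 2 - (c - p)) = 0 := by nlinarith [hbc, hq]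
    rcases mul_eq_zero.mp this with h | h
    · exact absurd h (ne_of_gt hc)
    · linarith
  -- a^2 = c
  have ha2 : a ^ 2 = c := by linear_combination (-a) * h1 - c * h3
  have hS : a ^ 2 + b ^ 2 = 2 * c - p := by rw [ha2, hb2]; ring
  have hSsq : (a ^ 2 + b ^ 2) ^ 2 = p ^ 2 + 4 := by nlinarith [hS, hq]
  have hSnn : 0 ≤ a ^ 2 + b ^ 2 := by positivity
  have hsqrt : Real.sqrt (p ^ 2 + 4) = a ^ 2 + b ^ 2 := by
    rw [← hSsq, Real.sqrt_sq hSnn]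
  refine ⟨?_, hsqrt.symm, ?_, by linarith [hq]⟩
  · simp [idmdeJacobian, Matrix.det_fin_two, Matrix.submatrix]
    nlinarith [hq]
  · rw [hsqrt]
    have : 0 < a ^ 2 + b ^ 2 := by
      rcases eq_or_lt_of_le hSnn with h | h
      · exfalso; nlinarith [hSsq, sq_nonneg p]
      · exact h
    exact this
end
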